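/- Let i ∈ ℤ≥0, j ≥ 1, and suppose given for each p = 1,...,j an active morphism f_p : [1] → [n_p] and a cellular morphism c_p : [n_p] → [i] in Δ. If the composites satisfy c_p(n_p) = c_{p+1}(0) for 1 ≤ p < j, then, setting n = n₁ + ... + n_j, the maps c_p glue to a unique cellular morphism c : [n] → [i] with c ∘ η_p = c_p for each p, where η_p : [n_p] → [n] is the inert map η_p(q) = n₁ + ... + n_{p-1} + q; moreover the map f : [j] → [n] defined by f(p) = n₁ + ... + n_p (and f(0) = 0) is active and satisfies c(f(p)) = c_p(n_p) for all p. -/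

import Mathlib

/-- A morphism `[n] → [m]` of the simplex category is *active* if it preserves
the extremal elements. -/
def Active {n m : ℕ} (f : Fin (n + 1) → Fin (m + 1)) : Prop :=
  f 0 = 0 ∧ f (Fin.last n) = Fin.last m

/-- A morphism `[m] → [n]` of the simplex category is *cellular* if
`f(i+1) ≤ f(i) + 1` for all `i`. -/
def Cellular {m n : ℕ} (f : Fin (m + 1) → Fin (n + 1)) : Prop :=
  ∀ i : Fin m, (f i.succ : ℕ) ≤ (f i.castSucc : ℕ) + 1


section Aux

variable {j : ℕ} (n : Fin j → ℕ)

/-- Partial sums of the `n`'s. -/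
def pSum (p : ℕ) : ℕ := ∑ r ∈ Finset.univ.filter (fun r : Fin j => (r : ℕ) < p), n r

lemma pSum_zero : pSum n 0 = 0 := by simp [pSum]

lemma pSum_succ (p : ℕ) (hp : p < j) : pSum n (p + 1) = pSum n p + n ⟨p, hp⟩ := by
  have h : Finset.univ.filter (fun r : Fin j => (r : ℕ) < p + 1)
      = insert (⟨p, hp⟩ : Fin j) (Finset.univ.filter (fun r : Fin j => (r : ℕ) < p)) := by
    ext r
    simp [Nat.lt_succ_iff_lt_or_eq, Fin.ext_iff, or_comm]
    omega
  rw [pSum, h, Finset.sum_insert (by simp), pSum, add_comm]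

lemma pSum_top (p : ℕ) (hp : j ≤ p) : pSum n p = ∑ r, n r := by
  rw [pSum]
  apply Finset.sum_congr _ (fun _ _ => rfl)
  ext r
  simp only [Finset.mem_filter, Finset.mem_univ, true_and, iff_true]
  omega

lemma pSum_mono : Monotone (pSum n) := by
  intro a b hab
  apply Finset.sum_le_sum_of_subset
  intro r
  simp only [Finset.mem_filter, Finset.mem_univ, true_and]
  omega

lemma pSum_le (p : ℕ) : pSum n p ≤ ∑ r, n r := by
  rw [← pSum_top n (max p j) (le_max_right _ _)]
  exact pSum_mono n (le_max_left _ _)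

/-- The block index of `x`. -/
def pIdx (x : ℕ) : ℕ := Nat.findGreatest (fun p => pSum n p ≤ x) (j - 1)

lemma pIdx_lt (hj : 1 ≤ j) (x : ℕ) : pIdx n x < j :=
  lt_of_le_of_lt (Nat.findGreatest_le _) (by omega)

lemma pIdx_le (x : ℕ) : pSum n (pIdx n x) ≤ x :=
  Nat.findGreatest_spec (P := fun p => pSum n p ≤ x) (Nat.zero_le (j - 1))
    (by simp [pSum_zero])

lemma pIdx_greatest (x m : ℕ) (h1 : pIdx n x < m) (h2 : m ≤ j - 1) : x < pSum n m := by
  have := Nat.findGreatest_is_greatest h1 h2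
  omega

lemma pIdx_ub (hj : 1 ≤ j) (x : ℕ) (hx : x ≤ ∑ r, n r) :
    x ≤ pSum n (pIdx n x) + n ⟨pIdx n x, pIdx_lt n hj x⟩ := by
  rw [← pSum_succ n _ (pIdx_lt n hj x)]
  by_cases h : pIdx n x + 1 ≤ j - 1
  · exact le_of_lt (pIdx_greatest n x _ (Nat.lt_succ_self _) h)
  · have hle : pIdx n x ≤ j - 1 := Nat.findGreatest_le _
    have heq : pIdx n x + 1 = j := by omega
    rw [heq, pSum_top n j le_rfl]
    exact hx

lemma pIdx_mono : Monotone (pIdx n) := by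
  intro a b hab
  exact Nat.findGreatest_mono (fun m hm => le_trans hm hab) le_rfl

variable {i : ℕ} (c : ∀ p : Fin j, Fin (n p + 1) → Fin (i + 1))

lemma chainLemma (hcm : ∀ p, Monotone (c p))
    (hglue : ∀ p q : Fin j, (q : ℕ) = (p : ℕ) + 1 → c p (Fin.last (n p)) = c q 0) :
    ∀ p' p (hp : p < j) (hp' : p' < j), p < p' →
      c ⟨p, hp⟩ (Fin.last _) ≤ c ⟨p', hp'⟩ 0 ∧
      (pSum n (p + 1) = pSum n p' → c ⟨p, hp⟩ (Fin.last _) = c ⟨p', hp'⟩ 0) := by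
  intro p'
  induction p' with
  | zero => intro p hp hp' h; omega
  | succ k ih =>
    intro p hp hp' hlt
    have hk : k < j := by omega
    have hgluek : c ⟨k, hk⟩ (Fin.last _) = c ⟨k + 1, hp'⟩ 0 := hglue _ _ rfl
    rcases Nat.lt_succ_iff_lt_or_eq.mp hlt with h | h
    · obtain ⟨ih1, ih2⟩ := ih p hp hk h
      have h0le : c ⟨k, hk⟩ 0 ≤ c ⟨k, hk⟩ (Fin.last _) := hcm _ (Fin.zero_le _)
      constructor
      · exact ih1.trans (h0le.trans (le_of_eq hgluek))
      · intro heq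
        have h1 : pSum n (p + 1) ≤ pSum n k := pSum_mono n h
        have h2 : pSum n (k + 1) = pSum n k + n ⟨k, hk⟩ := pSum_succ n k hk
        have hnk : n ⟨k, hk⟩ = 0 := by omega
        have heq2 : pSum n (p + 1) = pSum n k := by omega
        have hklast : (0 : Fin (n ⟨k, hk⟩ + 1)) = Fin.last _ := by
          apply Fin.ext
          simp [hnk]
        rw [ih2 heq2, hklast, hgluek]
    · subst h
      exact ⟨le_of_eq hgluek, fun _ => hgluek⟩

end Aux

section Glue

variable {i j : ℕ} {n : Fin j → ℕ}

lemma sub_bound (hj : 1 ≤ j) (x : Fin ((∑ r, n r) + 1)) :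
    (x : ℕ) - pSum n (pIdx n ↑x) < n ⟨pIdx n ↑x, pIdx_lt n hj ↑x⟩ + 1 := by
  have h1 := pIdx_ub n hj ↑x (Nat.lt_succ_iff.mp x.isLt)
  omega

/-- The glued map. -/
def glueFun (hj : 1 ≤ j) (c : ∀ p : Fin j, Fin (n p + 1) → Fin (i + 1))
    (x : Fin ((∑ r, n r) + 1)) : Fin (i + 1) :=
  c ⟨pIdx n ↑x, pIdx_lt n hj ↑x⟩ ⟨(x : ℕ) - pSum n (pIdx n ↑x), sub_bound hj x⟩

variable (hj : 1 ≤ j) (c : ∀ p : Fin j, Fin (n p + 1) → Fin (i + 1))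
  (hcm : ∀ p, Monotone (c p)) (hcc : ∀ p, Cellular (c p))
  (hglue : ∀ p q : Fin j, (q : ℕ) = (p : ℕ) + 1 → c p (Fin.last (n p)) = c q 0)

include hcm hglue in
lemma glueFun_eq : ∀ (p : Fin j) (q : Fin (n p + 1)) (x : Fin ((∑ r, n r) + 1)),
    (x : ℕ) = pSum n (p : ℕ) + (q : ℕ) → glueFun hj c x = c p q := by
  intro p q x hx
  obtain ⟨pv, hpv⟩ := p
  have hx' : (x : ℕ) = pSum n pv + (q : ℕ) := hx
  have hq : (q : ℕ) ≤ n ⟨pv, hpv⟩ := Nat.lt_succ_iff.mp q.isLt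
  have hle : pSum n (pIdx n ↑x) ≤ ↑x := pIdx_le n ↑x
  have hub := pIdx_ub n hj ↑x (Nat.lt_succ_iff.mp x.isLt)
  have hple : pv ≤ pIdx n ↑x := by
    by_contra hcon
    push_neg at hcon
    have := pIdx_greatest n ↑x pv hcon (by omega)
    omega
  rcases eq_or_lt_of_le hple with h | h
  · subst h
    exact congrArg (c ⟨pIdx n ↑x, hpv⟩) (Fin.ext (by
      show (x : ℕ) - pSum n (pIdx n ↑x) = (q : ℕ)
      omega))
  · have h1 : pSum n (pv + 1) ≤ pSum n (pIdx n ↑x) := pSum_mono n h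
    have h2 : pSum n (pv + 1) = pSum n pv + n ⟨pv, hpv⟩ := pSum_succ n pv hpv
    have heq : pSum n (pv + 1) = pSum n (pIdx n ↑x) := by omega
    obtain ⟨_, hch⟩ := chainLemma n c hcm hglue (pIdx n ↑x) pv hpv (pIdx_lt n hj ↑x) h
    have e1 : glueFun hj c x = c ⟨pIdx n ↑x, pIdx_lt n hj ↑x⟩ 0 :=
      congrArg (c ⟨pIdx n ↑x, pIdx_lt n hj ↑x⟩) (Fin.ext (by simp only [Fin.val_zero]; omega))
    rw [e1, ← hch heq]
    exact congrArg (c ⟨pv, hpv⟩) (Fin.ext (by simp only [Fin.val_last]; omega))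

include hcm hglue in
lemma glueFun_mono : Monotone (glueFun hj c) := by
  intro a b hab
  have hab' : (a : ℕ) ≤ (b : ℕ) := hab
  have hpm : pIdx n ↑a ≤ pIdx n ↑b := pIdx_mono n hab'
  have hlea : pSum n (pIdx n ↑a) ≤ ↑a := pIdx_le n ↑a
  have hleb : pSum n (pIdx n ↑b) ≤ ↑b := pIdx_le n ↑b
  have huba := pIdx_ub n hj ↑a (Nat.lt_succ_iff.mp a.isLt)
  have hubb := pIdx_ub n hj ↑b (Nat.lt_succ_iff.mp b.isLt)
  have ea : glueFun hj c a
      = c ⟨pIdx n ↑a, pIdx_lt n hj ↑a⟩ ⟨↑a - pSum n (pIdx n ↑a), sub_bound hj a⟩ := rfl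
  have eb : glueFun hj c b
      = c ⟨pIdx n ↑b, pIdx_lt n hj ↑b⟩ ⟨↑b - pSum n (pIdx n ↑b), sub_bound hj b⟩ := rfl
  rcases eq_or_lt_of_le hpm with h | h
  · -- same block
    have hps : pSum n (pIdx n ↑a) = pSum n (pIdx n ↑b) := by rw [h]
    have hns : n ⟨pIdx n ↑a, pIdx_lt n hj ↑a⟩ = n ⟨pIdx n ↑b, pIdx_lt n hj ↑b⟩ :=
      congrArg n (Fin.ext h)
    have hna : (↑b - pSum n (pIdx n ↑a)) < n ⟨pIdx n ↑a, pIdx_lt n hj ↑a⟩ + 1 := by omega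
    have eb' : glueFun hj c b
        = c ⟨pIdx n ↑a, pIdx_lt n hj ↑a⟩ ⟨↑b - pSum n (pIdx n ↑a), hna⟩ := by
      apply glueFun_eq hj c hcm hglue
      show (b : ℕ) = pSum n (pIdx n ↑a) + (↑b - pSum n (pIdx n ↑a))
      omega
    rw [ea, eb']
    apply hcm
    rw [Fin.mk_le_mk]
    omega
  · calc glueFun hj c a ≤ c ⟨pIdx n ↑a, pIdx_lt n hj ↑a⟩ (Fin.last _) := by
          rw [ea]; exact hcm _ (Fin.le_last _)
      _ ≤ c ⟨pIdx n ↑b, pIdx_lt n hj ↑b⟩ 0 :=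
          (chainLemma n c hcm hglue _ _ _ _ h).1
      _ ≤ glueFun hj c b := by rw [eb]; exact hcm _ (Fin.zero_le _)

include hcm hcc hglue in
lemma glueFun_cell : Cellular (glueFun hj c) := by
  intro t
  have hxlt : (t : ℕ) < ∑ r, n r := t.isLt
  set x : ℕ := (t : ℕ) with hxdef
  have hsucc : ((t.succ : Fin ((∑ r, n r) + 1)) : ℕ) = x + 1 := rfl
  have hcast : ((t.castSucc : Fin ((∑ r, n r) + 1)) : ℕ) = x := rfl
  have hpm : pIdx n x ≤ pIdx n (x + 1) := pIdx_mono n (by omega)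
  have hlea : pSum n (pIdx n x) ≤ x := pIdx_le n x
  have hleb : pSum n (pIdx n (x + 1)) ≤ x + 1 := pIdx_le n (x + 1)
  have huba := pIdx_ub n hj x (by omega)
  have hubb := pIdx_ub n hj (x + 1) (by omega)
  have hpalt : pIdx n x < j := pIdx_lt n hj x
  have hpblt : pIdx n (x + 1) < j := pIdx_lt n hj (x + 1)
  rcases eq_or_lt_of_le hpm with h | h
  · -- same block
    have hps : pSum n (pIdx n x) = pSum n (pIdx n (x + 1)) := by rw [h]
    have hns : n ⟨pIdx n x, hpalt⟩ = n ⟨pIdx n (x + 1), hpblt⟩ := congrArg n (Fin.ext h)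
    have hlt : x - pSum n (pIdx n x) < n ⟨pIdx n x, hpalt⟩ := by omega
    have key := hcc ⟨pIdx n x, hpalt⟩ ⟨x - pSum n (pIdx n x), hlt⟩
    have es : glueFun hj c t.succ
        = c ⟨pIdx n x, hpalt⟩ ((⟨x - pSum n (pIdx n x), hlt⟩ : Fin (n ⟨pIdx n x, hpalt⟩)).succ) := by
      apply glueFun_eq hj c hcm hglue
      rw [hsucc]
      simp only [Fin.val_succ]
      omega
    have ec : glueFun hj c t.castSucc
        = c ⟨pIdx n x, hpalt⟩ ((⟨x - pSum n (pIdx n x), hlt⟩ : Fin (n ⟨pIdx n x, hpalt⟩)).castSucc) := by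
      apply glueFun_eq hj c hcm hglue
      rw [hcast]
      simp only [Fin.coe_castSucc]
      omega
    rw [es, ec]
    exact key
  · -- block boundary
    have hxb : x < pSum n (pIdx n (x + 1)) := pIdx_greatest n x _ h (by omega)
    have hxb2 : pSum n (pIdx n (x + 1)) = x + 1 := by omega
    have hxs : x < pSum n (pIdx n x + 1) :=
      pIdx_greatest n x (pIdx n x + 1) (Nat.lt_succ_self _) (by omega)
    have h2 : pSum n (pIdx n x + 1) = pSum n (pIdx n x) + n ⟨pIdx n x, hpalt⟩ :=
      pSum_succ n _ hpalt
    have h1 : pSum n (pIdx n x + 1) ≤ pSum n (pIdx n (x + 1)) := pSum_mono n h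
    have heq : pSum n (pIdx n x + 1) = pSum n (pIdx n (x + 1)) := by omega
    have hn1 : 1 ≤ n ⟨pIdx n x, hpalt⟩ := by omega
    have hlt : n ⟨pIdx n x, hpalt⟩ - 1 < n ⟨pIdx n x, hpalt⟩ := by omega
    have key := hcc ⟨pIdx n x, hpalt⟩ ⟨n ⟨pIdx n x, hpalt⟩ - 1, hlt⟩
    obtain ⟨_, hch⟩ := chainLemma n c hcm hglue _ _ hpalt hpblt h
    have es : glueFun hj c t.succ
        = c ⟨pIdx n x, hpalt⟩
            ((⟨n ⟨pIdx n x, hpalt⟩ - 1, hlt⟩ : Fin (n ⟨pIdx n x, hpalt⟩)).succ) := by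
      have e0 : glueFun hj c t.succ = c ⟨pIdx n (x + 1), hpblt⟩ 0 := by
        apply glueFun_eq hj c hcm hglue
        rw [hsucc]
        simp only [Fin.val_zero]
        omega
      have e1 : (⟨n ⟨pIdx n x, hpalt⟩ - 1, hlt⟩ : Fin (n ⟨pIdx n x, hpalt⟩)).succ
          = Fin.last (n ⟨pIdx n x, hpalt⟩) := Fin.ext (by simp only [Fin.val_succ, Fin.val_last]; omega)
      rw [e0, ← hch heq, e1]
    have ec : glueFun hj c t.castSucc
        = c ⟨pIdx n x, hpalt⟩
            ((⟨n ⟨pIdx n x, hpalt⟩ - 1, hlt⟩ : Fin (n ⟨pIdx n x, hpalt⟩)).castSucc) := by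
      apply glueFun_eq hj c hcm hglue
      rw [hcast]
      simp only [Fin.coe_castSucc]
      omega
    rw [es, ec]
    exact key

end Glue

/-- Gluing of cellular morphisms: given active morphisms `f_p : [1] → [n_p]`
and cellular morphisms `c_p : [n_p] → [i]` with matching endpoints
`c_p(n_p) = c_{p+1}(0)`, the `c_p` glue to a unique cellular morphism
`c : [n₁+⋯+n_j] → [i]` with `c ∘ η_p = c_p`, where `η_p` is the inert map
`q ↦ n₁+⋯+n_{p-1}+q`; moreover the map `f : [j] → [n]` with
`f(p) = n₁+⋯+n_p` is active and satisfies `c(f(p)) = c_p(n_p)`. -/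
theorem stmt5 (i j : ℕ) (hj : 1 ≤ j) (n : Fin j → ℕ)
    (f : ∀ p : Fin j, Fin (1 + 1) → Fin (n p + 1))
    (hfm : ∀ p, Monotone (f p)) (hfa : ∀ p, Active (f p))
    (c : ∀ p : Fin j, Fin (n p + 1) → Fin (i + 1))
    (hcm : ∀ p, Monotone (c p)) (hcc : ∀ p, Cellular (c p))
    (hglue : ∀ p q : Fin j, (q : ℕ) = (p : ℕ) + 1 → c p (Fin.last (n p)) = c q 0) :
    ∃! C : Fin ((∑ r, n r) + 1) → Fin (i + 1),
      (Monotone C ∧ Cellular C ∧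
        ∀ (p : Fin j) (q : Fin (n p + 1)) (x : Fin ((∑ r, n r) + 1)),
          (x : ℕ) = (∑ r ∈ Finset.univ.filter (fun r : Fin j => (r : ℕ) < (p : ℕ)), n r) + (q : ℕ) →
          C x = c p q) ∧
      ∃ F : Fin (j + 1) → Fin ((∑ r, n r) + 1),
        Monotone F ∧ Active F ∧
        (∀ p : Fin (j + 1),
          (F p : ℕ) = ∑ r ∈ Finset.univ.filter (fun r : Fin j => (r : ℕ) < (p : ℕ)), n r) ∧
        ∀ p : Fin j, C (F p.succ) = c p (Fin.last (n p)) := by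
  refine ⟨glueFun hj c, ⟨⟨glueFun_mono hj c hcm hglue, glueFun_cell hj c hcm hcc hglue, ?_⟩,
    ?_⟩, ?_⟩
  · intro p q x hx
    exact glueFun_eq hj c hcm hglue p q x hx
  · refine ⟨fun p => ⟨pSum n ↑p, by have := pSum_le n (p : ℕ); omega⟩, ?_, ⟨?_, ?_⟩, ?_, ?_⟩
    · intro a b hab
      rw [Fin.mk_le_mk]
      exact pSum_mono n hab
    · exact Fin.ext (by simpa using pSum_zero n)
    · exact Fin.ext (by simpa using pSum_top n j le_rfl)
    · intro p
      rfl
    · intro p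
      apply glueFun_eq hj c hcm hglue
      show pSum n ((p : ℕ) + 1) = pSum n (p : ℕ) + (Fin.last (n p) : ℕ)
      rw [pSum_succ n (p : ℕ) p.isLt, Fin.val_last]
  · rintro C' ⟨⟨_, _, hcompat⟩, -⟩
    funext x
    have hle : pSum n (pIdx n ↑x) ≤ ↑x := pIdx_le n ↑x
    have hx : (x : ℕ) = pSum n (pIdx n ↑x) + ((⟨↑x - pSum n (pIdx n ↑x), sub_bound hj x⟩ :
        Fin (n ⟨pIdx n ↑x, pIdx_lt n hj ↑x⟩ + 1)) : ℕ) := by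
      show (x : ℕ) = pSum n (pIdx n ↑x) + (↑x - pSum n (pIdx n ↑x))
      omega
    rw [hcompat ⟨pIdx n ↑x, pIdx_lt n hj ↑x⟩ _ x hx,
      glueFun_eq hj c hcm hglue ⟨pIdx n ↑x, pIdx_lt n hj ↑x⟩ _ x hx]
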